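/- For any finitely supported probability measure ρ on a finite set of indices and real-valued function p on that set with 0 < p i ≤ C for all i, one has −ln(E_ρ[p]) ≤ E_ρ[−ln p] − Var_ρ(p)/(2C²) where Var_ρ(p) = E_ρ[(p − E_ρ p)²]. -/

import Mathlib

open Set

lemma second_order_jensen_aux {C : ℝ} (hC : 0 < C) :
    ConvexOn ℝ (Set.Ioc 0 C) (fun t => -Real.log t - t ^ 2 / (2 * C ^ 2)) := by
  have hint : interior (Set.Ioc (0:ℝ) C) = Set.Ioo 0 C := interior_Ioc
  apply convexOn_of_hasDerivWithinAt2_nonneg (convex_Ioc 0 C)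
    (f' := fun t => -t⁻¹ - t / C ^ 2) (f'' := fun t => (t ^ 2)⁻¹ - (C ^ 2)⁻¹)
  · apply ContinuousOn.sub
    · exact (Real.continuousOn_log.mono (by
        intro x hx
        exact ne_of_gt hx.1)).neg
    · fun_prop
  · intro x hx
    rw [hint] at hx
    have hx0 : x ≠ 0 := ne_of_gt hx.1
    have h1 : HasDerivAt (fun t : ℝ => -Real.log t - t ^ 2 / (2 * C ^ 2))
        (-x⁻¹ - x / C ^ 2) x := by
      have := ((Real.hasDerivAt_log hx0).neg.sub
        (((hasDerivAt_pow 2 x)).div_const (2 * C ^ 2)))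
      refine this.congr_deriv ?_
      rw [show (2:ℕ) - 1 = 1 from rfl, pow_one, Nat.cast_ofNat]
      ring
    exact h1.hasDerivWithinAt
  · intro x hx
    rw [hint] at hx
    have hx0 : x ≠ 0 := ne_of_gt hx.1
    have h1 : HasDerivAt (fun t : ℝ => -t⁻¹ - t / C ^ 2) ((x ^ 2)⁻¹ - (C ^ 2)⁻¹) x := by
      have := ((hasDerivAt_inv hx0).neg.sub ((hasDerivAt_id x).div_const (C ^ 2)))
      refine this.congr_deriv ?_
      rw [neg_neg, one_div]
    exact h1.hasDerivWithinAt
  · intro x hx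
    rw [hint] at hx
    have h1 : x ^ 2 ≤ C ^ 2 := by nlinarith [hx.1, hx.2]
    have h2 : (0:ℝ) < x ^ 2 := pow_pos hx.1 2
    have : (C ^ 2)⁻¹ ≤ (x ^ 2)⁻¹ := by
      exact inv_anti₀ h2 h1
    linarith

/-- Second-order Jensen inequality for `-log`: for a probability mass function ρ
on a finite index set and `0 < p i ≤ C`,
`−ln(E_ρ[p]) ≤ E_ρ[−ln p] − Var_ρ(p)/(2C²)`. -/
theorem second_order_jensen_log {ι : Type*} [Fintype ι] (ρ p : ι → ℝ) (C : ℝ)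
    (hC : 0 < C) (hρ0 : ∀ i, 0 ≤ ρ i) (hρ1 : ∑ i, ρ i = 1)
    (hp0 : ∀ i, 0 < p i) (hpC : ∀ i, p i ≤ C) :
    -Real.log (∑ i, ρ i * p i) ≤
      (∑ i, ρ i * (-Real.log (p i))) -
        (∑ i, ρ i * (p i - ∑ j, ρ j * p j) ^ 2) / (2 * C ^ 2) := by
  have hconv := second_order_jensen_aux hC
  set μ := ∑ i, ρ i * p i with hμ
  have hjensen := hconv.map_sum_le (t := Finset.univ) (w := ρ) (p := p)
    (fun i _ => hρ0 i) hρ1 (fun i _ => ⟨hp0 i, hpC i⟩)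
  simp only [smul_eq_mul] at hjensen
  have hμC : μ ≤ C := by
    calc μ ≤ ∑ i, ρ i * C := Finset.sum_le_sum fun i _ => by
            exact mul_le_mul_of_nonneg_left (hpC i) (hρ0 i)
    _ = C := by rw [← Finset.sum_mul, hρ1, one_mul]
  have hμ0 : 0 < μ := by
    obtain ⟨i, -, hi⟩ : ∃ i ∈ Finset.univ, ρ i ≠ 0 := by
      by_contra h
      push_neg at h
      have : ∑ i, ρ i = 0 := Finset.sum_eq_zero fun i hi => h i hi
      rw [hρ1] at this; norm_num at this
    exact Finset.sum_pos' (fun j _ => mul_nonneg (hρ0 j) (hp0 j).le)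
      ⟨i, Finset.mem_univ i, mul_pos ((hρ0 i).lt_of_ne (Ne.symm hi)) (hp0 i)⟩
  -- variance identity
  have hC2 : (0:ℝ) < 2 * C ^ 2 := by positivity
  have hvar : ∑ i, ρ i * (p i - μ) ^ 2 = (∑ i, ρ i * p i ^ 2) - μ ^ 2 := by
    have : ∀ i, ρ i * (p i - μ) ^ 2 = ρ i * p i ^ 2 - 2 * μ * (ρ i * p i) + μ ^ 2 * ρ i := by
      intro i; ring
    rw [Finset.sum_congr rfl fun i _ => this i]
    rw [Finset.sum_add_distrib, Finset.sum_sub_distrib, ← Finset.mul_sum, ← Finset.mul_sum,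
      ← hμ, hρ1]
    ring
  have hsum : ∑ i, ρ i * (-Real.log (p i) - p i ^ 2 / (2 * C ^ 2))
      = (∑ i, ρ i * (-Real.log (p i))) - (∑ i, ρ i * p i ^ 2) / (2 * C ^ 2) := by
    rw [Finset.sum_div, ← Finset.sum_sub_distrib]
    exact Finset.sum_congr rfl fun i _ => by ring
  rw [hvar, sub_div]
  rw [hsum] at hjensen
  linarith [hjensen]
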